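/- arXiv:1207.0105 — 2 statements merged into one kernel-verified Lean document; each statement's English description precedes it below -/
import Mathlib

section
/- (Validity of the optimal one-sided IM.) Fix θ₀ > 0 and let A = (θ₀, ∞). For any true parameter value θ with 0 < θ ≤ θ₀ (i.e., θ ∈ A^c), if X is Poisson(θ)-distributed, then for every α ∈ (0,1), P{ F_{θ₀}(X − 1) ≥ 1 − α } ≤ α, where F_{θ₀}(x − 1) = ∑_{k=0}^{x-1} e^{-θ₀} θ₀^k / k! for x ≥ 1 and F_{θ₀}(−1) = 0. In other words, the optimal belief function bel_X(A) = F_{θ₀}(X − 1) is stochastically no larger than Uniform(0,1) whenever A is false. -/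
/-- The Poisson(θ) probability mass function. -/
noncomputable def poisPMF (θ : ℝ) (x : ℕ) : ℝ := Real.exp (-θ) * θ ^ x / Nat.factorial x

/-- F_{θ₀}(x − 1) = ∑_{k=0}^{x-1} e^{-θ₀} θ₀^k / k!, with F_{θ₀}(−1) = 0 when x = 0.
This is the optimal belief function for the one-sided assertion A = (θ₀, ∞). -/
noncomputable def belOneSided (θ₀ : ℝ) (x : ℕ) : ℝ := ∑ k ∈ Finset.range x, poisPMF θ₀ k

lemma poisPMF_nonneg (θ : ℝ) (hθ : 0 ≤ θ) (x : ℕ) : 0 ≤ poisPMF θ x := by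
  unfold poisPMF
  positivity

lemma summable_pois (θ : ℝ) : Summable (poisPMF θ) := by
  unfold poisPMF
  simpa [mul_div_assoc] using (Real.summable_pow_div_factorial θ).mul_left (Real.exp (-θ))

lemma tsum_pois (θ : ℝ) : ∑' x, poisPMF θ x = 1 := by
  unfold poisPMF
  rw [tsum_congr (fun x => mul_div_assoc (Real.exp (-θ)) (θ ^ x) (Nat.factorial x)),
    tsum_mul_left]
  have : ∑' n : ℕ, θ ^ n / (Nat.factorial n) = Real.exp θ := by
    rw [Real.exp_eq_exp_ℝ, NormedSpace.exp_eq_tsum_div]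
  rw [this, ← Real.exp_add]
  simp

lemma hasDerivAt_bel (n : ℕ) (t : ℝ) :
    HasDerivAt (fun s => belOneSided s n)
      (-(n * t ^ (n - 1) * Real.exp (-t) / Nat.factorial n)) t := by
  induction n with
  | zero => simpa [belOneSided] using (hasDerivAt_const t (0:ℝ))
  | succ n ih =>
    have hterm : HasDerivAt (fun s : ℝ => Real.exp (-s) * s ^ n / Nat.factorial n)
        ((-Real.exp (-t) * t ^ n + Real.exp (-t) * (n * t ^ (n - 1))) / Nat.factorial n) t := by
      have he : HasDerivAt (fun s : ℝ => Real.exp (-s)) (-Real.exp (-t)) t := by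
        simpa using ((hasDerivAt_neg t).exp)
      have hp : HasDerivAt (fun s : ℝ => s ^ n) (n * t ^ (n - 1)) t := by
        simpa using hasDerivAt_pow n t
      simpa using (he.mul hp).div_const (Nat.factorial n : ℝ)
    have hsum := ih.add hterm
    have heq : (fun s => belOneSided s (n + 1)) =
        fun s => belOneSided s n + Real.exp (-s) * s ^ n / Nat.factorial n := by
      funext s
      simp [belOneSided, Finset.sum_range_succ, poisPMF]
    rw [heq]
    refine hsum.congr_deriv ?_
    rcases Nat.eq_zero_or_pos n with hn | hn
    · subst hn; simp
    · obtain ⟨m, rfl⟩ := Nat.exists_eq_succ_of_ne_zero hn.ne'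
      have h1 : (Nat.factorial (m + 1) : ℝ) = (m + 1) * Nat.factorial m := by
        push_cast [Nat.factorial_succ]; ring
      have h2 : (Nat.factorial (m + 2) : ℝ) = (m + 2) * ((m + 1) * Nat.factorial m) := by
        push_cast [Nat.factorial_succ]; ring
      have hm : (Nat.factorial m : ℝ) ≠ 0 := Nat.cast_ne_zero.mpr (Nat.factorial_ne_zero m)
      simp only [Nat.add_sub_cancel, h1, h2]
      push_cast
      field_simp
      ring

lemma bel_antitone (n : ℕ) {a b : ℝ} (ha : 0 < a) (hab : a ≤ b) :
    belOneSided b n ≤ belOneSided a n := by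
  have h : AntitoneOn (fun s => belOneSided s n) (Set.Icc a b) := by
    apply antitoneOn_of_deriv_nonpos (convex_Icc a b)
    · exact fun t _ => (hasDerivAt_bel n t).continuousAt.continuousWithinAt
    · exact fun t _ => (hasDerivAt_bel n t).differentiableAt.differentiableWithinAt
    · intro t ht
      rw [interior_Icc] at ht
      rw [(hasDerivAt_bel n t).deriv]
      have ht0 : 0 ≤ t := le_of_lt (lt_of_lt_of_le ha ht.1.le)
      have : 0 ≤ (n : ℝ) * t ^ (n - 1) * Real.exp (-t) / Nat.factorial n := by positivity
      linarith
  exact h (Set.left_mem_Icc.mpr hab) (Set.right_mem_Icc.mpr hab) hab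

/-- Validity of the optimal one-sided IM: Fix θ₀ > 0 and let A = (θ₀, ∞).
For any true parameter value θ with 0 < θ ≤ θ₀ (i.e., θ ∈ A^c), if X is
Poisson(θ)-distributed, then for every α ∈ (0,1), P{ F_{θ₀}(X − 1) ≥ 1 − α } ≤ α: the
optimal belief function bel_X(A) = F_{θ₀}(X − 1) is stochastically no larger than
Uniform(0,1) whenever A is false. -/
theorem one_sided_IM_valid (θ₀ : ℝ) (hθ₀ : 0 < θ₀) (θ : ℝ) (hθ : 0 < θ) (hθθ₀ : θ ≤ θ₀)
    (α : ℝ) (hα : α ∈ Set.Ioo (0:ℝ) 1) :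
    ∑' x : {x : ℕ // 1 - α ≤ belOneSided θ₀ x}, poisPMF θ x ≤ α := by
  obtain ⟨hα0, hα1⟩ := hα
  by_cases hne : ∃ x, 1 - α ≤ belOneSided θ₀ x
  · classical
    set n := Nat.find hne with hn
    have hmono : Monotone (belOneSided θ₀) := by
      intro i j hij
      exact Finset.sum_le_sum_of_subset_of_nonneg (Finset.range_subset_range.mpr hij)
        (fun k _ _ => poisPMF_nonneg θ₀ hθ₀.le k)
    have hTset : {x : ℕ | 1 - α ≤ belOneSided θ₀ x} = ((Finset.range n : Finset ℕ) : Set ℕ)ᶜ := by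
      ext x
      simp only [Set.mem_setOf_eq, Set.mem_compl_iff, Finset.coe_range, Set.mem_Iio, not_lt]
      constructor
      · intro hx; exact Nat.find_le hx
      · intro hx; exact le_trans (Nat.find_spec hne) (hmono hx)
    have hsum := summable_pois θ
    have key := Summable.sum_add_tsum_compl (s := Finset.range n) hsum
    rw [tsum_pois θ] at key
    have h1 : ∑' x : {x : ℕ // 1 - α ≤ belOneSided θ₀ x}, poisPMF θ x
        = ∑' x : (((Finset.range n : Finset ℕ) : Set ℕ)ᶜ : Set ℕ), poisPMF θ x := by
      have e1 := tsum_subtype {x : ℕ | 1 - α ≤ belOneSided θ₀ x} (poisPMF θ)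
      have e2 := tsum_subtype (((Finset.range n : Finset ℕ) : Set ℕ)ᶜ) (poisPMF θ)
      refine e1.trans ?_
      rw [hTset]
      exact e2.symm
    rw [h1]
    have h2 : ∑' x : (((Finset.range n : Finset ℕ) : Set ℕ)ᶜ : Set ℕ), poisPMF θ x
        = 1 - belOneSided θ n := by
      have : belOneSided θ n = ∑ k ∈ Finset.range n, poisPMF θ k := rfl
      linarith [key]
    rw [h2]
    have h3 : belOneSided θ₀ n ≤ belOneSided θ n := bel_antitone n hθ hθθ₀
    have h4 : 1 - α ≤ belOneSided θ₀ n := Nat.find_spec hne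
    linarith
  · push_neg at hne
    have : IsEmpty {x : ℕ // 1 - α ≤ belOneSided θ₀ x} :=
      ⟨fun ⟨x, hx⟩ => absurd hx (not_le.mpr (hne x))⟩
    rw [tsum_empty]
    exact hα0.le
end

section
/- (Proposition 1, countable-chain form.) Let (𝕌, Σ, μ) be a probability space and let S_0 ⊆ S_1 ⊆ S_2 ⊆ ⋯ be an increasing sequence of measurable subsets of 𝕌. Then there exists a set-valued map 𝒮 : (0,1) → 𝒫(𝕌), taking values in { S_n : n ∈ ℕ } ∪ { 𝕌 }, such that for every n ∈ ℕ the set { v ∈ (0,1) : 𝒮(v) ⊆ S_n } is Lebesgue measurable with Lebesgue measure exactly μ(S_n). Consequently the induced belief function attains the upper bound: P{ 𝒮 ⊆ S_n } = μ(S_n) for every n. -/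
/-- Proposition 1, countable-chain form: Let (𝕌, Σ, μ) be a probability
space and let S_0 ⊆ S_1 ⊆ S_2 ⊆ ⋯ be an increasing sequence of measurable subsets of 𝕌.
Then there exists a set-valued map 𝒮 : (0,1) → 𝒫(𝕌), taking values in
{ S_n : n ∈ ℕ } ∪ { 𝕌 }, such that for every n ∈ ℕ the set { v ∈ (0,1) : 𝒮(v) ⊆ S_n }
is Lebesgue measurable with Lebesgue measure exactly μ(S_n). Consequently the induced
belief function attains the upper bound: P{ 𝒮 ⊆ S_n } = μ(S_n) for every n. -/
theorem exists_predictive_random_set_attaining_bound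
    {𝕌 : Type*} [MeasurableSpace 𝕌] (μ : MeasureTheory.Measure 𝕌)
    [MeasureTheory.IsProbabilityMeasure μ]
    (S : ℕ → Set 𝕌) (hmeas : ∀ n, MeasurableSet (S n)) (hmono : Monotone S) :
    ∃ 𝒮 : ℝ → Set 𝕌,
      (∀ v ∈ Set.Ioo (0:ℝ) 1, 𝒮 v ∈ Set.range S ∪ {Set.univ}) ∧
      ∀ n : ℕ,
        MeasurableSet {v : ℝ | v ∈ Set.Ioo (0:ℝ) 1 ∧ 𝒮 v ⊆ S n} ∧
        MeasureTheory.volume {v : ℝ | v ∈ Set.Ioo (0:ℝ) 1 ∧ 𝒮 v ⊆ S n} = μ (S n) := by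
  classical
  set f : ℕ → ℝ := fun n => (μ (S n)).toReal with hf
  have hfin : ∀ n, μ (S n) ≠ ⊤ := fun n => MeasureTheory.measure_ne_top μ (S n)
  have hfmono : Monotone f := fun a b hab =>
    ENNReal.toReal_mono (hfin b) (MeasureTheory.measure_mono (hmono hab))
  have hf1 : ∀ n, f n ≤ 1 := by
    intro n
    have := MeasureTheory.prob_le_one (μ := μ) (s := S n)
    calc f n ≤ (1 : ENNReal).toReal := ENNReal.toReal_mono (by simp) this
    _ = 1 := by simp
  refine ⟨fun v => if h : ∃ n, v < f n then S (Nat.find h) else Set.univ, ?_, ?_⟩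
  · intro v _
    by_cases h : ∃ n, v < f n
    · simp [h]
    · simp [h]
  · intro n
    have key : {v : ℝ | v ∈ Set.Ioo (0:ℝ) 1 ∧
        (if h : ∃ m, v < f m then S (Nat.find h) else Set.univ) ⊆ S n}
        = Set.Ioo 0 (f n) := by
      ext v
      simp only [Set.mem_setOf_eq, Set.mem_Ioo]
      constructor
      · rintro ⟨⟨hv0, hv1⟩, hsub⟩
        refine ⟨hv0, ?_⟩
        by_contra hlt
        push_neg at hlt
        by_cases h : ∃ m, v < f m
        · rw [dif_pos h] at hsub
          have hle : μ (S (Nat.find h)) ≤ μ (S n) := MeasureTheory.measure_mono hsub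
          have : f (Nat.find h) ≤ f n := ENNReal.toReal_mono (hfin n) hle
          exact absurd (Nat.find_spec h) (not_lt.2 (this.trans hlt))
        · rw [dif_neg h] at hsub
          push_neg at h
          have : S n = Set.univ := Set.univ_subset_iff.mp hsub
          have hfn : f n = 1 := by
            simp [hf, this, MeasureTheory.measure_univ]
          exact absurd (hfn ▸ hv1 : v < f n) (not_lt.2 (h n))
      · rintro ⟨hv0, hvf⟩
        have h : ∃ m, v < f m := ⟨n, hvf⟩
        refine ⟨⟨hv0, lt_of_lt_of_le hvf (hf1 n)⟩, ?_⟩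
        rw [dif_pos h]
        have hle : Nat.find h ≤ n := Nat.find_le hvf
        exact hmono hle
    rw [key]
    refine ⟨measurableSet_Ioo, ?_⟩
    rw [Real.volume_Ioo]
    simp only [sub_zero]
    exact ENNReal.ofReal_toReal (hfin n)
end
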